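/- For every natural number n ≥ 1, ∫₀^π (sin θ/θ²)·(log(πe/θ))^{−1−2/n} dθ ≥ n/(π·(1+log 2)^{2/n}). In particular these integrals tend to +∞ as n → ∞. -/

import Mathlib

open Real Set MeasureTheory Filter

noncomputable section

/-- `φ(t) = log (π e / t)`. -/
def phi (t : ℝ) : ℝ := Real.log (π * Real.exp 1 / t)


lemma pie_pos : (0:ℝ) < π * Real.exp 1 := by positivity

lemma phi_eq {t : ℝ} (ht : 0 < t) : phi t = Real.log (π * Real.exp 1) - Real.log t := by
  rw [phi, Real.log_div pie_pos.ne' ht.ne']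

lemma one_le_phi {t : ℝ} (ht : 0 < t) (ht' : t ≤ π) : 1 ≤ phi t := by
  rw [phi]
  have h1 : Real.exp 1 ≤ π * Real.exp 1 / t := by
    rw [le_div_iff₀ ht]
    have := Real.exp_pos 1
    nlinarith
  calc (1:ℝ) = Real.log (Real.exp 1) := by rw [Real.log_exp]
    _ ≤ _ := Real.log_le_log (Real.exp_pos 1) h1

lemma hasDerivAt_phi {x : ℝ} (hx : 0 < x) : HasDerivAt phi (-x⁻¹) x := by
  have h : HasDerivAt (fun t => Real.log (π * Real.exp 1) - Real.log t) (-x⁻¹) x :=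
    (Real.hasDerivAt_log hx.ne').const_sub _
  refine h.congr_of_eventuallyEq ?_
  filter_upwards [isOpen_Ioi.mem_nhds (show x ∈ Ioi 0 from hx)] with t ht
  exact phi_eq ht

lemma phi_anti {a b : ℝ} (ha : 0 < a) (hab : a < b) : phi b < phi a := by
  rw [phi_eq ha, phi_eq (ha.trans hab)]
  have := Real.log_lt_log ha hab
  linarith

lemma phi_image {c : ℝ} (hc0 : 0 < c) : phi '' Ioo 0 c = Ioi (phi c) := by
  ext u
  constructor
  · rintro ⟨θ, hθ, rfl⟩
    exact phi_anti hθ.1 hθ.2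
  · intro hu
    refine ⟨π * Real.exp 1 * Real.exp (-u), ⟨by positivity, ?_⟩, ?_⟩
    · have h1 : Real.exp (-u) < Real.exp (-(phi c)) := Real.exp_lt_exp.2 (by linarith [mem_Ioi.1 hu])
      have h2 : Real.exp (-(phi c)) = c / (π * Real.exp 1) := by
        rw [phi, ← Real.log_inv, Real.exp_log (by positivity)]
        field_simp
      calc π * Real.exp 1 * Real.exp (-u) < π * Real.exp 1 * (c / (π * Real.exp 1)) := by
            rw [← h2]; exact (mul_lt_mul_iff_right₀ pie_pos).2 h1
        _ = c := by field_simp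
    · rw [phi]
      have he : π * Real.exp 1 / (π * Real.exp 1 * Real.exp (-u)) = Real.exp u := by
        rw [Real.exp_neg]
        field_simp
      rw [he, Real.log_exp]

/-- Change of variables: integral and integrability of `θ⁻¹ φ(θ)^p` on `(0,c)`. -/
lemma key (p : ℝ) {c : ℝ} (hc0 : 0 < c) :
    (IntegrableOn (fun u : ℝ => u ^ p) (Ioi (phi c)) ↔
      IntegrableOn (fun θ : ℝ => θ⁻¹ * phi θ ^ p) (Ioo 0 c)) ∧
    (∫ u in Ioi (phi c), u ^ p) = ∫ θ in Ioo (0:ℝ) c, θ⁻¹ * phi θ ^ p := by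
  have hs : MeasurableSet (Ioo (0:ℝ) c) := measurableSet_Ioo
  have hf' : ∀ x ∈ Ioo (0:ℝ) c, HasDerivWithinAt phi (-x⁻¹) (Ioo 0 c) x :=
    fun x hx => (hasDerivAt_phi hx.1).hasDerivWithinAt
  have hinj : InjOn phi (Ioo 0 c) := by
    intro a ha b hb hab
    rcases lt_trichotomy a b with h | h | h
    · exact absurd hab (phi_anti ha.1 h).ne'
    · exact h
    · exact absurd hab (phi_anti hb.1 h).ne
  have heq : EqOn (fun x : ℝ => |(-x⁻¹)| • (phi x ^ p)) (fun θ : ℝ => θ⁻¹ * phi θ ^ p)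
      (Ioo 0 c) := by
    intro x hx
    simp [abs_of_nonneg (inv_nonneg.2 hx.1.le), smul_eq_mul]
  constructor
  · rw [← phi_image hc0,
      integrableOn_image_iff_integrableOn_abs_deriv_smul hs hf' hinj (fun u => u ^ p)]
    exact ⟨fun h => h.congr_fun heq hs, fun h => h.congr_fun heq.symm hs⟩
  · rw [← phi_image hc0,
      integral_image_eq_integral_abs_deriv_smul hs hf' hinj (fun u => u ^ p)]
    exact setIntegral_congr_fun hs heq

lemma phi_pi : phi π = 1 := by
  have : π * Real.exp 1 / π = Real.exp 1 := by field_simp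
  rw [phi, this, Real.log_exp]

lemma phi_pi_div_two : phi (π / 2) = 1 + Real.log 2 := by
  have : π * Real.exp 1 / (π / 2) = 2 * Real.exp 1 := by
    field_simp
  rw [phi, this, Real.log_mul (by norm_num) (Real.exp_pos 1).ne', Real.log_exp]
  ring

lemma A_pos : (0:ℝ) < 1 + Real.log 2 := by
  have := Real.log_pos (by norm_num : (1:ℝ) < 2)
  linarith

/-- The core lower bound. -/
lemma main_bound (n : ℕ) (hn : 1 ≤ n) :
    (n : ℝ) / (π * (1 + Real.log 2) ^ ((2 : ℝ) / n)) ≤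
      ∫ θ in Ioo (0 : ℝ) π, (Real.sin θ / θ ^ 2) * phi θ ^ (-(1 + 2 / (n : ℝ))) := by
  have hn0 : (0:ℝ) < (n:ℝ) := by exact_mod_cast hn
  set p : ℝ := -(1 + 2 / (n : ℝ)) with hp_def
  have hp : p < -1 := by
    have : 0 < 2 / (n:ℝ) := by positivity
    simp only [hp_def]; linarith
  set F : ℝ → ℝ := fun θ => Real.sin θ / θ ^ 2 * phi θ ^ p with hF_def
  set g : ℝ → ℝ := fun θ => θ⁻¹ * phi θ ^ p with hg_def
  have hφm : Measurable phi := (measurable_const.div measurable_id).log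
  have hφpm : Measurable (fun θ => phi θ ^ p) := (show Measurable fun x : ℝ => x ^ p by measurability).comp hφm
  have hFm : Measurable F :=
    (Real.measurable_sin.div (measurable_id.pow_const 2)).mul hφpm
  have hπ2 : (0:ℝ) < π / 2 := by linarith [Real.pi_pos]
  have hgπ : IntegrableOn g (Ioo 0 π) := by
    refine ((key p Real.pi_pos).1).mp ?_
    exact integrableOn_Ioi_rpow_of_lt hp (by rw [phi_pi]; norm_num)
  have hA2pos : (0:ℝ) < phi (π / 2) := by rw [phi_pi_div_two]; exact A_pos
  have hg2 : IntegrableOn g (Ioo 0 (π/2)) :=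
    ((key p hπ2).1).mp (integrableOn_Ioi_rpow_of_lt hp hA2pos)
  -- pointwise facts on (0, π)
  have hFnonneg : ∀ θ ∈ Ioo (0:ℝ) π, 0 ≤ F θ := by
    intro θ hθ
    have h1 : 0 ≤ Real.sin θ := Real.sin_nonneg_of_nonneg_of_le_pi hθ.1.le hθ.2.le
    have h2 : (0:ℝ) ≤ phi θ ^ p := Real.rpow_nonneg (by linarith [one_le_phi hθ.1 hθ.2.le]) _
    exact mul_nonneg (div_nonneg h1 (sq_nonneg _)) h2
  have hFleg : ∀ θ ∈ Ioo (0:ℝ) π, F θ ≤ g θ := by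
    intro θ hθ
    have h2 : (0:ℝ) ≤ phi θ ^ p := Real.rpow_nonneg (by linarith [one_le_phi hθ.1 hθ.2.le]) _
    have hsin : Real.sin θ ≤ θ := Real.sin_le hθ.1.le
    have h3 : Real.sin θ / θ ^ 2 ≤ θ⁻¹ := by
      rw [div_le_iff₀ (pow_pos hθ.1 2)]
      have h4 : θ⁻¹ * θ ^ 2 = θ := by rw [sq, ← mul_assoc, inv_mul_cancel₀ hθ.1.ne', one_mul]
      rw [h4]; exact hsin
    exact mul_le_mul_of_nonneg_right h3 h2
  have hF : IntegrableOn F (Ioo 0 π) := by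
    refine Integrable.mono hgπ hFm.aestronglyMeasurable ?_
    refine (ae_restrict_iff' measurableSet_Ioo).2 (Filter.Eventually.of_forall fun θ hθ => ?_)
    rw [Real.norm_eq_abs, Real.norm_eq_abs, abs_of_nonneg (hFnonneg θ hθ)]
    exact le_trans (hFleg θ hθ) (le_abs_self _)
  -- chain of inequalities
  have step1 : ∫ θ in Ioo (0:ℝ) (π/2), F θ ≤ ∫ θ in Ioo (0:ℝ) π, F θ := by
    refine setIntegral_mono_set hF ?_ ?_
    · exact (ae_restrict_iff' measurableSet_Ioo).2 (Filter.Eventually.of_forall hFnonneg)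
    · exact HasSubset.Subset.eventuallyLE (Ioo_subset_Ioo_right (by linarith [Real.pi_pos]))
  have step2 : ∫ θ in Ioo (0:ℝ) (π/2), (2 / π) * g θ ≤ ∫ θ in Ioo (0:ℝ) (π/2), F θ := by
    refine setIntegral_mono_on (hg2.const_mul _)
      (hF.mono_set (Ioo_subset_Ioo_right (by linarith [Real.pi_pos]))) measurableSet_Ioo ?_
    intro θ hθ
    have hθπ : θ ∈ Ioo (0:ℝ) π := ⟨hθ.1, hθ.2.trans_le (by linarith [Real.pi_pos])⟩
    have h2 : (0:ℝ) ≤ phi θ ^ p := Real.rpow_nonneg (by linarith [one_le_phi hθπ.1 hθπ.2.le]) _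
    have hsin : 2 / π * θ ≤ Real.sin θ := Real.mul_le_sin hθ.1.le hθ.2.le
    have h3 : 2 / π * θ⁻¹ ≤ Real.sin θ / θ ^ 2 := by
      rw [le_div_iff₀ (pow_pos hθ.1 2)]
      have h5 : θ⁻¹ * θ ^ 2 = θ := by rw [sq, ← mul_assoc, inv_mul_cancel₀ hθ.1.ne', one_mul]
      have h4 : 2 / π * θ⁻¹ * θ ^ 2 = 2 / π * θ := by rw [mul_assoc, h5]
      rw [h4]; exact hsin
    calc 2 / π * g θ = (2 / π * θ⁻¹) * (phi θ ^ p) := by rw [hg_def]; ring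
      _ ≤ (Real.sin θ / θ ^ 2) * (phi θ ^ p) := mul_le_mul_of_nonneg_right h3 h2
      _ = F θ := rfl
  have hval : ∫ θ in Ioo (0:ℝ) (π/2), g θ = -(1 + Real.log 2) ^ (p + 1) / (p + 1) := by
    rw [← (key p hπ2).2, phi_pi_div_two, integral_Ioi_rpow_of_lt hp (by rw [← phi_pi_div_two]; exact hA2pos)]
  have hveq : (n : ℝ) / (π * (1 + Real.log 2) ^ ((2 : ℝ) / n)) =
      ∫ θ in Ioo (0:ℝ) (π/2), (2 / π) * g θ := by
    rw [integral_const_mul, hval]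
    have hp1 : p + 1 = -((2:ℝ) / n) := by rw [hp_def]; ring
    rw [hp1, Real.rpow_neg A_pos.le]
    have hApow : (0:ℝ) < (1 + Real.log 2) ^ ((2:ℝ) / n) := Real.rpow_pos_of_pos A_pos _
    have hπ0 := Real.pi_pos
    field_simp
  rw [hveq]
  exact step2.trans step1


/-- For every `n ≥ 1`, `∫₀^π (sin θ/θ²) φ(θ)^{−1−2/n} dθ ≥ n/(π (1+log 2)^{2/n})`;
in particular these integrals tend to `+∞` as `n → ∞`. -/
theorem integral_sin_div_sq_phi_lower_bound :
    (∀ n : ℕ, 1 ≤ n →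
      (n : ℝ) / (π * (1 + Real.log 2) ^ ((2 : ℝ) / n)) ≤
        ∫ θ in Ioo (0 : ℝ) π, (Real.sin θ / θ ^ 2) * phi θ ^ (-(1 + 2 / (n : ℝ)))) ∧
    Tendsto (fun n : ℕ =>
        ∫ θ in Ioo (0 : ℝ) π, (Real.sin θ / θ ^ 2) * phi θ ^ (-(1 + 2 / (n : ℝ))))
      atTop atTop := by 
  refine ⟨main_bound, ?_⟩
  have hπ := Real.pi_pos
  have hA := A_pos
  refine tendsto_atTop_mono' atTop ?_
    ((tendsto_natCast_atTop_atTop (R := ℝ)).atTop_div_const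
      (by positivity : (0:ℝ) < π * (1 + Real.log 2) ^ (2:ℝ)))
  filter_upwards [eventually_ge_atTop 1] with n hn
  have hn0 : (0:ℝ) < (n:ℝ) := by exact_mod_cast hn
  have h1 : (1 + Real.log 2) ^ ((2:ℝ)/n) ≤ (1 + Real.log 2) ^ (2:ℝ) := by
    refine Real.rpow_le_rpow_of_exponent_le (by linarith [Real.log_pos (by norm_num : (1:ℝ) < 2)]) ?_
    calc (2:ℝ)/n ≤ 2/1 := by
          apply div_le_div_of_nonneg_left (by norm_num) one_pos
          exact_mod_cast hn
      _ = 2 := by norm_num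
  have h2 : (n:ℝ) / (π * (1 + Real.log 2) ^ (2:ℝ)) ≤
      (n:ℝ) / (π * (1 + Real.log 2) ^ ((2:ℝ)/n)) := by
    have hden : 0 < π * (1 + Real.log 2) ^ ((2:ℝ)/n) :=
      mul_pos hπ (Real.rpow_pos_of_pos hA _)
    apply div_le_div_of_nonneg_left hn0.le hden
    exact mul_le_mul_of_nonneg_left h1 hπ.le
  exact h2.trans (main_bound n hn)
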